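/- arXiv:1911.09111 — 3 statements merged into one kernel-verified Lean document; each statement's English description precedes it below -/
import Mathlib

section
/- For every α > 0, lim_{κ→∞} M(κ/2 + 1, κ + 1/2, −α²/4) = e^{−α²/8} and lim_{κ→∞} M(κ/2, κ + 1/2, −α²/4) = e^{−α²/8}, where the limits are taken as the real parameter κ tends to +∞. -/
open MeasureTheory Filter Set

noncomputable section

/-- The precipitation-free self-similar solution `ψ(x,t)`. -/
def psi (α β x t : ℝ) : ℝ :=
  if 0 < t then
    (α * β / 2) * Real.exp (α ^ 2 / 4) *
      ∫ ζ in Set.Ioi (max (|x| / Real.sqrt t) α), Real.exp (-ζ ^ 2 / 4)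
  else 0

/-- The profile `Ψ(η)` in similarity coordinates. -/
def PsiP (α β η : ℝ) : ℝ :=
  (α * β / 2) * Real.exp (α ^ 2 / 4) * ∫ ζ in Set.Ioi (max η α), Real.exp (-ζ ^ 2 / 4)

/-- Regularity of a weak solution: `w` is the spatial derivative of `u - ψ`;
both are continuous on `ℝ × [0,∞)` and bounded on `ℝ × [0,T]` for every `T > 0`. -/
def AuxReg (α β : ℝ) (u w : ℝ → ℝ → ℝ) : Prop :=
  (∀ t ∈ Set.Ici (0:ℝ), ∀ x : ℝ, HasDerivAt (fun y => u y t - psi α β y t) (w x t) x) ∧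
  ContinuousOn (fun q : ℝ × ℝ => u q.1 q.2 - psi α β q.1 q.2) (Set.univ ×ˢ Set.Ici 0) ∧
  ContinuousOn (fun q : ℝ × ℝ => w q.1 q.2) (Set.univ ×ˢ Set.Ici 0) ∧
  ∀ T > (0:ℝ), ∃ C : ℝ, ∀ x : ℝ, ∀ t ∈ Set.Icc (0:ℝ) T,
    |u x t - psi α β x t| ≤ C ∧ |w x t| ≤ C

/-- A test function of class `C^{1,1}(ℝ × [0,T])`, vanishing for large `|x|` and at `t = T`,
together with its partial derivatives `φt`, `φx`. -/
def IsTestFun (T : ℝ) (φ φt φx : ℝ → ℝ → ℝ) : Prop :=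
  (∀ x : ℝ, ∀ t ∈ Set.Icc (0:ℝ) T,
    HasDerivWithinAt (fun s => φ x s) (φt x t) (Set.Icc 0 T) t) ∧
  (∀ x : ℝ, ∀ t ∈ Set.Icc (0:ℝ) T, HasDerivAt (fun y => φ y t) (φx x t) x) ∧
  ContinuousOn (fun q : ℝ × ℝ => φ q.1 q.2) (Set.univ ×ˢ Set.Icc 0 T) ∧
  ContinuousOn (fun q : ℝ × ℝ => φt q.1 q.2) (Set.univ ×ˢ Set.Icc 0 T) ∧
  ContinuousOn (fun q : ℝ × ℝ => φx q.1 q.2) (Set.univ ×ˢ Set.Icc 0 T) ∧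
  (∃ R : ℝ, ∀ x : ℝ, ∀ t ∈ Set.Icc (0:ℝ) T, R ≤ |x| → φ x t = 0) ∧
  (∀ x : ℝ, φ x T = 0)

/-- The weak form of the equation, relative to a given precipitation function `p` and
the spatial derivative `w` of `u - ψ`. -/
def WeakForm (α β : ℝ) (u p w : ℝ → ℝ → ℝ) : Prop :=
  ∀ T > (0:ℝ), ∀ φ φt φx : ℝ → ℝ → ℝ, IsTestFun T φ φt φx →
    (∫ t in Set.Ioc (0:ℝ) T, ∫ x : ℝ, φt x t * (u x t - psi α β x t))
      = ∫ t in Set.Ioc (0:ℝ) T, ∫ x : ℝ, (φx x t * w x t + p x t * u x t * φ x t)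

/-- A weak solution of the linear auxiliary problem with given precipitation function `p`. -/
def IsAuxSolution (α β : ℝ) (p u : ℝ → ℝ → ℝ) : Prop :=
  (∀ x t : ℝ, u (-x) t = u x t) ∧
  ∃ w : ℝ → ℝ → ℝ, AuxReg α β u w ∧ WeakForm α β u p w

/-- A weak solution `(u, p)` of the HHMO model. -/
def IsWeakSolution (α β ustar : ℝ) (u p : ℝ → ℝ → ℝ) : Prop :=
  (∀ x t : ℝ, u (-x) t = u x t) ∧
  (∀ x t : ℝ, p (-x) t = p x t) ∧
  Measurable (fun q : ℝ × ℝ => p q.1 q.2) ∧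
  (∀ x : ℝ, ∀ t ∈ Set.Ici (0:ℝ),
    (sSup ((fun s => u x s) '' Set.Icc 0 t) < ustar → p x t = 0) ∧
    (sSup ((fun s => u x s) '' Set.Icc 0 t) = ustar → p x t ∈ Set.Icc (0:ℝ) 1) ∧
    (ustar < sSup ((fun s => u x s) '' Set.Icc 0 t) → p x t = 1)) ∧
  (∀ x : ℝ, MonotoneOn (fun t => p x t) (Set.Ici (0:ℝ))) ∧
  ∃ w : ℝ → ℝ → ℝ, AuxReg α β u w ∧ WeakForm α β u p w

/-- Condition (P): the precipitation function depends only on `x` beyond the parabola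
`t = x²/α²`. -/
def CondP (α : ℝ) (p : ℝ → ℝ → ℝ) (pstar : ℝ → ℝ) : Prop :=
  Measurable pstar ∧
  ∀ᵐ x ∂(volume.restrict (Set.Ioi (0:ℝ))), ∀ t : ℝ, x ^ 2 / α ^ 2 < t → p x t = pstar x

/-- The admissible class `𝒜` of precipitation functions. -/
def IsAdmissible (p : ℝ → ℝ → ℝ) : Prop :=
  (∀ x t : ℝ, p (-x) t = p x t) ∧
  MeasureTheory.LocallyIntegrableOn (fun q : ℝ × ℝ => p q.1 q.2) (Set.Ioi 0 ×ˢ Set.Ici 0) ∧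
  ∀ T > (0:ℝ), ∃ R : ℝ, ∀ x ≥ R, ∀ t ∈ Set.Icc (0:ℝ) T, p x t = 0

/-- `u` converges uniformly, in parabolic similarity coordinates, to the profile `Φ`. -/
def ConvUnif (u : ℝ → ℝ → ℝ) (Φ : ℝ → ℝ) : Prop :=
  ∀ ε > (0:ℝ), ∃ T : ℝ, ∀ t ≥ T, ∀ η ≥ (0:ℝ), |u (η * Real.sqrt t) t - Φ η| < ε

/-- The error function. -/
def erf (x : ℝ) : ℝ := (2 / Real.sqrt Real.pi) * ∫ s in (0:ℝ)..x, Real.exp (-s ^ 2)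

/-- The complementary error function. -/
def erfc (x : ℝ) : ℝ := (2 / Real.sqrt Real.pi) * ∫ s in Set.Ioi x, Real.exp (-s ^ 2)

/-- Kummer's confluent hypergeometric function `M(a,b,z)` (real arguments). -/
def kummerM (a b z : ℝ) : ℝ :=
  ∑' n : ℕ, (Polynomial.eval a (ascPochhammer ℝ n) / Polynomial.eval b (ascPochhammer ℝ n))
    * z ^ n / (n.factorial : ℝ)

/-- `κ = (1 + √(4γ+1))/2`, the positive root of `κ(κ-1) = γ`. -/
def kappaOf (γ : ℝ) : ℝ := (1 + Real.sqrt (4 * γ + 1)) / 2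

/-- The value `u*_γ` determined by the derivative matching condition. -/
def ustarGamma (α β γ : ℝ) : ℝ :=
  (α * β / 2) *
    (kappaOf γ * kummerM (kappaOf γ / 2 + 1) (kappaOf γ + 1 / 2) (-α ^ 2 / 4) /
        (α * kummerM (kappaOf γ / 2) (kappaOf γ + 1 / 2) (-α ^ 2 / 4)) +
      Real.exp (-α ^ 2 / 4) / (Real.sqrt Real.pi * erfc (α / 2)))⁻¹

/-- The self-similar profile `Φ_γ`. -/
def Phi (α β γ η : ℝ) : ℝ :=
  if η < α then
    ustarGamma α β γ * η ^ kappaOf γ *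
      kummerM (kappaOf γ / 2) (kappaOf γ + 1 / 2) (-η ^ 2 / 4) /
      (α ^ kappaOf γ * kummerM (kappaOf γ / 2) (kappaOf γ + 1 / 2) (-α ^ 2 / 4))
  else ustarGamma α β γ * erfc (η / 2) / erfc (α / 2)

lemma ascPochhammer_eval_prod (a : ℝ) (n : ℕ) :
    Polynomial.eval a (ascPochhammer ℝ n) = ∏ i ∈ Finset.range n, (a + i) := by
  induction n with
  | zero => simp
  | succ n ih => rw [ascPochhammer_succ_eval, ih, Finset.prod_range_succ]

lemma ratio_tendsto (a b : ℝ) :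
    Tendsto (fun κ : ℝ => (κ / 2 + a) / (κ + b)) atTop (nhds (1 / 2)) := by
  have h : Tendsto (fun κ : ℝ => (1 / 2 + a * κ⁻¹) / (1 + b * κ⁻¹)) atTop
      (nhds ((1 / 2 + a * 0) / (1 + b * 0))) := by
    apply Tendsto.div
    · exact tendsto_const_nhds.add (tendsto_const_nhds.mul tendsto_inv_atTop_zero)
    · exact tendsto_const_nhds.add (tendsto_const_nhds.mul tendsto_inv_atTop_zero)
    · norm_num
  simp only [mul_zero, add_zero, div_one] at h
  apply h.congr'
  filter_upwards [eventually_gt_atTop (max 0 (-b))] with κ hκ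
  have h0 : κ ≠ 0 := ne_of_gt (lt_of_le_of_lt (le_max_left _ _) hκ)
  have hb : κ + b ≠ 0 := by
    have := lt_of_le_of_lt (le_max_right _ _) hκ; intro h; nlinarith
  field_simp

lemma kummer_tendsto (c z : ℝ) (hc0 : 0 ≤ c) (hc1 : c ≤ 1) :
    Tendsto (fun κ : ℝ => kummerM (κ / 2 + c) (κ + 1 / 2) z)
      atTop (nhds (Real.exp (z / 2))) := by
  have hexp : Real.exp (z / 2) = ∑' n : ℕ, (1 / 2 : ℝ) ^ n * z ^ n / n.factorial := by
    rw [Real.exp_eq_exp_ℝ, NormedSpace.exp_eq_tsum_div]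
    exact tsum_congr fun n => by rw [div_pow, one_div_pow]; ring
  rw [hexp]
  unfold kummerM
  apply tendsto_tsum_of_dominated_convergence
    (bound := fun n : ℕ => |z| ^ n / n.factorial)
  · exact Real.summable_pow_div_factorial |z|
  · intro n
    have key : Tendsto (fun κ : ℝ =>
        (∏ i ∈ Finset.range n, ((κ / 2 + (c + i)) / (κ + (1 / 2 + i)))) * z ^ n / n.factorial)
        atTop (nhds ((1 / 2 : ℝ) ^ n * z ^ n / n.factorial)) := by
      have hp : Tendsto (fun κ : ℝ =>
          ∏ i ∈ Finset.range n, ((κ / 2 + (c + i)) / (κ + (1 / 2 + i))))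
          atTop (nhds (∏ _i ∈ Finset.range n, (1 / 2 : ℝ))) :=
        tendsto_finset_prod _ (fun i _ => ratio_tendsto (c + i) (1 / 2 + i))
      simp only [Finset.prod_const, Finset.card_range] at hp
      exact (hp.mul_const (z ^ n)).div_const _
    apply key.congr'
    filter_upwards [eventually_ge_atTop (1 : ℝ)] with κ hκ
    rw [ascPochhammer_eval_prod, ascPochhammer_eval_prod, ← Finset.prod_div_distrib]
    congr 2
    apply Finset.prod_congr rfl
    intro i _
    ring_nf
  · filter_upwards [eventually_ge_atTop (1 : ℝ)] with κ hκ
    intro n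
    rw [ascPochhammer_eval_prod, ascPochhammer_eval_prod, ← Finset.prod_div_distrib]
    have hle : (∏ i ∈ Finset.range n, (κ / 2 + c + i) / (κ + 1 / 2 + i)) ∈ Set.Icc (0:ℝ) 1 := by
      constructor
      · apply Finset.prod_nonneg
        intro i _
        apply div_nonneg <;> positivity
      · apply Finset.prod_le_one
        · intro i _; apply div_nonneg <;> positivity
        · intro i _
          apply div_le_one_of_le₀ _ (by positivity)
          linarith
    rw [Real.norm_eq_abs, abs_div, abs_mul, abs_pow, Nat.abs_cast,
      abs_of_nonneg hle.1]
    have hmul : (∏ i ∈ Finset.range n, (κ / 2 + c + i) / (κ + 1 / 2 + i)) * |z| ^ n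
        ≤ |z| ^ n := mul_le_of_le_one_left (by positivity) hle.2
    gcongr


/-- limits of Kummer's function as the real parameter `κ → ∞`. -/
theorem kummer_limits (α : ℝ) (hα : 0 < α) :
    Filter.Tendsto (fun κ : ℝ => kummerM (κ / 2 + 1) (κ + 1 / 2) (-α ^ 2 / 4))
      Filter.atTop (nhds (Real.exp (-α ^ 2 / 8))) ∧
    Filter.Tendsto (fun κ : ℝ => kummerM (κ / 2) (κ + 1 / 2) (-α ^ 2 / 4))
      Filter.atTop (nhds (Real.exp (-α ^ 2 / 8))) := by
  have h : (-α ^ 2 / 4) / 2 = -α ^ 2 / 8 := by ring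
  constructor
  · have := kummer_tendsto 1 (-α ^ 2 / 4) (by norm_num) le_rfl
    rwa [h] at this
  · have := kummer_tendsto 0 (-α ^ 2 / 4) le_rfl (by norm_num)
    rw [h] at this
    simpa using this


end
end

section
/- Fix α > 0 and u* > 0, and for κ ≥ 1 define v(η, κ) = u*·η^κ·M(κ/2, κ+1/2, −η²/4)/(α^κ·M(κ/2, κ+1/2, −α²/4)) for η ∈ (0, α]. Then for any 1 ≤ κ₁ < κ₂: (a) v(η, κ₂) − v(η, κ₁) < 0 for all η ∈ (0, α); and (b) ∂_η v(α, κ₂) > ∂_η v(α, κ₁); in particular, κ ↦ ∂_η v(α, κ) is strictly increasing on [1, ∞). -/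
open MeasureTheory Filter Set

noncomputable section

/-- The left-hand profile `v(η, κ)` normalized so that `v(α, κ) = u*`. -/
def vProf (α ustar κ η : ℝ) : ℝ :=
  ustar * η ^ κ * kummerM (κ / 2) (κ + 1 / 2) (-η ^ 2 / 4) /
    (α ^ κ * kummerM (κ / 2) (κ + 1 / 2) (-α ^ 2 / 4))

namespace VProfAux


/-- coefficients of the even power series for `M(κ/2, κ+1/2, -η²/4)` in `η`. -/
def c (κ : ℝ) (n : ℕ) : ℝ :=
  Polynomial.eval (κ/2) (ascPochhammer ℝ n) / Polynomial.eval (κ + 1/2) (ascPochhammer ℝ n)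
    * (-1/4 : ℝ) ^ n / (n.factorial : ℝ)

lemma asc_pos {x : ℝ} (hx : 0 < x) (n : ℕ) : 0 < Polynomial.eval x (ascPochhammer ℝ n) :=
  ascPochhammer_pos n x hx

lemma asc_le {x y : ℝ} (hx : 0 < x) (hxy : x ≤ y) (n : ℕ) :
    Polynomial.eval x (ascPochhammer ℝ n) ≤ Polynomial.eval y (ascPochhammer ℝ n) := by
  induction n with
  | zero => simp
  | succ n ih =>
      rw [ascPochhammer_succ_eval, ascPochhammer_succ_eval]
      have h1 : 0 < Polynomial.eval x (ascPochhammer ℝ n) := asc_pos hx n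
      have h2 : (0:ℝ) < x + n := by positivity
      have := asc_pos (lt_of_lt_of_le hx hxy) n
      nlinarith

lemma abs_c_le {κ : ℝ} (hκ : 1 ≤ κ) (n : ℕ) : |c κ n| ≤ (1/4)^n / (n.factorial : ℝ) := by
  have ha : (0:ℝ) < κ/2 := by linarith
  have hb : (0:ℝ) < κ + 1/2 := by linarith
  have hab : κ/2 ≤ κ + 1/2 := by linarith
  have h1 : 0 < Polynomial.eval (κ + 1/2) (ascPochhammer ℝ n) := asc_pos hb n
  have h2 : 0 < Polynomial.eval (κ/2) (ascPochhammer ℝ n) := asc_pos ha n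
  have h3 : Polynomial.eval (κ/2) (ascPochhammer ℝ n) / Polynomial.eval (κ + 1/2) (ascPochhammer ℝ n) ≤ 1 :=
    (div_le_one h1).2 (asc_le ha hab n)
  have h4 : (0:ℝ) < (n.factorial : ℝ) := by positivity
  rw [c, abs_div, abs_mul, abs_pow]
  rw [abs_of_nonneg (le_of_lt (div_pos h2 h1)), abs_of_nonneg h4.le]
  have : |(-1/4 : ℝ)| = 1/4 := by norm_num
  rw [this, div_le_div_iff₀ h4 h4]
  have hp : (0:ℝ) ≤ (1/4:ℝ)^n := by positivity
  nlinarith [mul_nonneg (mul_nonneg (sub_nonneg.2 h3) hp) h4.le]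



lemma summable_of_abs_le {f g : ℕ → ℝ} (hg : Summable g) (h : ∀ n, |f n| ≤ g n) :
    Summable f :=
  (Summable.of_nonneg_of_le (fun n => abs_nonneg _) h hg).of_abs

lemma summable_master (K : ℝ) :
    Summable (fun n : ℕ => 4 * (K^2)^n / (n.factorial : ℝ)) := by
  simpa [mul_div_assoc] using (Real.summable_pow_div_factorial (K^2)).mul_left 4

lemma nat_le_two_pow (n : ℕ) : ((n:ℕ):ℝ) ≤ 2^n := by
  exact_mod_cast (Nat.lt_two_pow_self (n := n)).le

lemma absxp {x K : ℝ} (hK : 1 ≤ K) (hx : |x| ≤ K) {m n : ℕ} (h : m ≤ n) : |x|^m ≤ K^n :=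
  le_trans (pow_le_pow_left₀ (abs_nonneg x) hx m) (pow_le_pow_right₀ hK h)

lemma step {K : ℝ} (hK : 1 ≤ K) (n : ℕ) (M : ℝ) (hM : 0 ≤ M) (h4 : (1/4:ℝ)^n * M ≤ 4) :
    (1/4:ℝ)^n / (n.factorial:ℝ) * (M * K^(2*n)) ≤ 4*(K^2)^n/(n.factorial:ℝ) := by
  rw [pow_mul]
  have h1 : (1/4:ℝ)^n / (n.factorial:ℝ) * (M * (K^2)^n)
      = ((1/4:ℝ)^n * M) * (K^2)^n / (n.factorial:ℝ) := by ring
  rw [h1]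
  gcongr

/-- abstract differentiation-of-tsum lemma -/
lemma hasDerivAt_tsum_of_bound (f f' : ℕ → ℝ → ℝ)
    (hderiv : ∀ n x, HasDerivAt (f n) (f' n x) x)
    (hbd : ∀ K : ℝ, 1 ≤ K → ∃ u : ℕ → ℝ, Summable u ∧
      ∀ n, ∀ x : ℝ, |x| ≤ K → |f n x| ≤ u n ∧ |f' n x| ≤ u n)
    (x : ℝ) : HasDerivAt (fun y => ∑' n, f n y) (∑' n, f' n x) x := by
  set K : ℝ := |x| + 1 with hKdef
  have hK : 1 ≤ K := by rw [hKdef]; linarith [abs_nonneg x]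
  obtain ⟨u, hu, hub⟩ := hbd K hK
  have hs : IsOpen (Ioo (-K) K) := isOpen_Ioo
  have hxmem : x ∈ Ioo (-K) K := by
    constructor <;> cases' abs_le.1 (le_refl |x|) with h1 h2 <;> nlinarith [abs_nonneg x, neg_abs_le x, le_abs_self x]
  have habs : ∀ y ∈ Ioo (-K) K, |y| ≤ K := by
    intro y hy; rw [abs_le]; exact ⟨hy.1.le, hy.2.le⟩
  apply hasDerivAt_of_tendstoUniformlyOn hs
    (tendstoUniformlyOn_tsum hu (fun n y hy => by
      rw [Real.norm_eq_abs]; exact (hub n y (habs y hy)).2))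
    (Eventually.of_forall (fun N y hy => HasDerivAt.sum (fun n _ => hderiv n y)))
    (fun y hy => ?_) hxmem
  have hsf : Summable (fun n => f n y) :=
    summable_of_abs_le hu (fun n => (hub n y (habs y hy)).1)
  simp only [Finset.sum_apply]
  exact hsf.hasSum

def f0 (κ : ℝ) (n : ℕ) (x : ℝ) : ℝ := c κ n * x^(2*n)
def f1 (κ : ℝ) (n : ℕ) (x : ℝ) : ℝ := c κ n * (((2*n:ℕ):ℝ) * x^(2*n-1))
def f2 (κ : ℝ) (n : ℕ) (x : ℝ) : ℝ :=
  c κ n * (((2*n:ℕ):ℝ) * (((2*n-1:ℕ):ℝ) * x^(2*n-1-1)))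

lemma hasDerivAt_f0 (κ : ℝ) (n : ℕ) (x : ℝ) : HasDerivAt (fun y => f0 κ n y) (f1 κ n x) x :=
  (hasDerivAt_pow (2*n) x).const_mul (c κ n)

lemma hasDerivAt_f1 (κ : ℝ) (n : ℕ) (x : ℝ) : HasDerivAt (fun y => f1 κ n y) (f2 κ n x) x :=
  ((hasDerivAt_pow (2*n-1) x).const_mul (((2*n:ℕ):ℝ))).const_mul (c κ n)

lemma two_n_le (n : ℕ) : ((2*n:ℕ):ℝ) ≤ 2*2^n := by
  push_cast; linarith [nat_le_two_pow n]

lemma two_n1_le (n : ℕ) : ((2*n-1:ℕ):ℝ) ≤ 2*2^n := by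
  have : ((2*n-1:ℕ):ℝ) ≤ ((2*n:ℕ):ℝ) := by exact_mod_cast Nat.sub_le _ _
  linarith [two_n_le n]

lemma quarter_pow_le_one (n : ℕ) : ((1:ℝ)/4)^n ≤ 1 := pow_le_one₀ (by norm_num) (by norm_num)

lemma f0_bound {κ K x : ℝ} (hκ : 1 ≤ κ) (hK : 1 ≤ K) (hx : |x| ≤ K) (n : ℕ) :
    |f0 κ n x| ≤ 4*(K^2)^n/(n.factorial:ℝ) := by
  have hc := abs_c_le hκ n
  calc |f0 κ n x| = |c κ n| * |x|^(2*n) := by rw [f0, abs_mul, abs_pow]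
    _ ≤ (1/4:ℝ)^n/(n.factorial:ℝ) * (1 * K^(2*n)) := by
        rw [one_mul]
        exact mul_le_mul hc (absxp hK hx le_rfl) (pow_nonneg (abs_nonneg x) _) (by positivity)
    _ ≤ 4*(K^2)^n/(n.factorial:ℝ) := step hK n 1 one_pos.le
        (by nlinarith [quarter_pow_le_one n])

lemma f1_bound {κ K x : ℝ} (hκ : 1 ≤ κ) (hK : 1 ≤ K) (hx : |x| ≤ K) (n : ℕ) :
    |f1 κ n x| ≤ 4*(K^2)^n/(n.factorial:ℝ) := by
  have hc := abs_c_le hκ n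
  have h4 : (1/4:ℝ)^n * (2*2^n) ≤ 4 := by
    have h1 : (1/4:ℝ)^n * 2^n = (1/2:ℝ)^n := by rw [← mul_pow]; norm_num
    have h2 : ((1:ℝ)/2)^n ≤ 1 := pow_le_one₀ (by norm_num) (by norm_num)
    nlinarith [pow_nonneg (by norm_num : (0:ℝ) ≤ 1/4) n]
  calc |f1 κ n x| = |c κ n| * (((2*n:ℕ):ℝ) * |x|^(2*n-1)) := by
        rw [f1, abs_mul, abs_mul, abs_pow, Nat.abs_cast]
    _ ≤ (1/4:ℝ)^n/(n.factorial:ℝ) * ((2*2^n) * K^(2*n)) := by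
        refine mul_le_mul hc (mul_le_mul (two_n_le n) (absxp hK hx (by omega))
          (pow_nonneg (abs_nonneg x) _) (by positivity)) (by positivity) (by positivity)
    _ ≤ 4*(K^2)^n/(n.factorial:ℝ) := step hK n (2*2^n) (by positivity) h4

lemma f2_bound {κ K x : ℝ} (hκ : 1 ≤ κ) (hK : 1 ≤ K) (hx : |x| ≤ K) (n : ℕ) :
    |f2 κ n x| ≤ 4*(K^2)^n/(n.factorial:ℝ) := by
  have hc := abs_c_le hκ n
  have h4 : (1/4:ℝ)^n * ((2*2^n)*(2*2^n)) ≤ 4 := by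
    have h1 : (1/4:ℝ)^n * 4^n = 1 := by rw [← mul_pow]; norm_num
    have h2 : (2:ℝ)^n * 2^n = 4^n := by rw [← mul_pow]; norm_num
    nlinarith [pow_nonneg (by norm_num : (0:ℝ) ≤ 1/4) n]
  calc |f2 κ n x| = |c κ n| * (((2*n:ℕ):ℝ) * (((2*n-1:ℕ):ℝ) * |x|^(2*n-1-1))) := by
        rw [f2, abs_mul, abs_mul, abs_mul, abs_pow, Nat.abs_cast, Nat.abs_cast]
    _ ≤ (1/4:ℝ)^n/(n.factorial:ℝ) * ((2*2^n) * ((2*2^n) * K^(2*n))) := by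
        refine mul_le_mul hc (mul_le_mul (two_n_le n) (mul_le_mul (two_n1_le n)
          (absxp hK hx (by omega)) (pow_nonneg (abs_nonneg x) _) (by positivity))
          (by positivity) (by positivity)) (by positivity) (by positivity)
    _ = (1/4:ℝ)^n/(n.factorial:ℝ) * (((2*2^n)*(2*2^n)) * K^(2*n)) := by ring
    _ ≤ 4*(K^2)^n/(n.factorial:ℝ) := step hK n ((2*2^n)*(2*2^n)) (by positivity) h4

def F (κ x : ℝ) : ℝ := ∑' n, f0 κ n x
def F1 (κ x : ℝ) : ℝ := ∑' n, f1 κ n x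
def F2 (κ x : ℝ) : ℝ := ∑' n, f2 κ n x

lemma summable_f0 {κ : ℝ} (hκ : 1 ≤ κ) (x : ℝ) : Summable (fun n => f0 κ n x) :=
  summable_of_abs_le (summable_master (|x|+1))
    (fun n => f0_bound hκ (by linarith [abs_nonneg x]) (by linarith) n)
lemma summable_f1 {κ : ℝ} (hκ : 1 ≤ κ) (x : ℝ) : Summable (fun n => f1 κ n x) :=
  summable_of_abs_le (summable_master (|x|+1))
    (fun n => f1_bound hκ (by linarith [abs_nonneg x]) (by linarith) n)
lemma summable_f2 {κ : ℝ} (hκ : 1 ≤ κ) (x : ℝ) : Summable (fun n => f2 κ n x) :=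
  summable_of_abs_le (summable_master (|x|+1))
    (fun n => f2_bound hκ (by linarith [abs_nonneg x]) (by linarith) n)

lemma hasDerivAt_F {κ : ℝ} (hκ : 1 ≤ κ) (x : ℝ) : HasDerivAt (F κ) (F1 κ x) x :=
  hasDerivAt_tsum_of_bound _ _ (hasDerivAt_f0 κ)
    (fun K hK => ⟨_, summable_master K, fun n y hy =>
      ⟨f0_bound hκ hK hy n, f1_bound hκ hK hy n⟩⟩) x

lemma hasDerivAt_F1 {κ : ℝ} (hκ : 1 ≤ κ) (x : ℝ) : HasDerivAt (F1 κ) (F2 κ x) x :=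
  hasDerivAt_tsum_of_bound _ _ (hasDerivAt_f1 κ)
    (fun K hK => ⟨_, summable_master K, fun n y hy =>
      ⟨f1_bound hκ hK hy n, f2_bound hκ hK hy n⟩⟩) x

lemma continuous_F {κ : ℝ} (hκ : 1 ≤ κ) : Continuous (F κ) :=
  continuous_iff_continuousAt.2 fun x => (hasDerivAt_F hκ x).continuousAt
lemma continuous_F1 {κ : ℝ} (hκ : 1 ≤ κ) : Continuous (F1 κ) :=
  continuous_iff_continuousAt.2 fun x => (hasDerivAt_F1 hκ x).continuousAt

lemma F_zero (κ : ℝ) : F κ 0 = 1 := by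
  rw [F, tsum_eq_single 0]
  · simp [f0, c]
  · intro n hn
    simp [f0, zero_pow (by omega : 2*n ≠ 0)]

lemma c_rec {κ : ℝ} (hκ : 1 ≤ κ) (n : ℕ) :
    c κ (n+1) * ((2*(n:ℝ)+2) * (2*κ + (2*(n:ℝ)+1))) = -(c κ n * ((n:ℝ) + κ/2)) := by
  have hb : (0:ℝ) < κ + 1/2 := by linarith
  have h1 : Polynomial.eval (κ + 1/2) (ascPochhammer ℝ n) ≠ 0 := (asc_pos hb n).ne'
  have h2 : (κ + 1/2 + (n:ℝ)) ≠ 0 := by positivity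
  have h3 : ((n.factorial : ℝ)) ≠ 0 := by positivity
  have h4 : ((n:ℝ) + 1) ≠ 0 := by positivity
  have e1 : c κ (n+1) = c κ n * ((κ/2 + (n:ℝ)) / (κ + 1/2 + (n:ℝ))) * ((-1/4) / ((n:ℝ)+1)) := by
    rw [c, c, ascPochhammer_succ_eval, ascPochhammer_succ_eval, Nat.factorial_succ, pow_succ]
    push_cast
    generalize Polynomial.eval (κ+1/2) (ascPochhammer ℝ n) = B
    generalize ((n:ℝ)+1) = t
    generalize (κ + 1/2 + (n:ℝ)) = s
    ring
  rw [e1]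
  field_simp
  ring

/-- The Kummer ODE in the variable `η`. -/
lemma F_ode {κ : ℝ} (hκ : 1 ≤ κ) (η : ℝ) :
    η * F2 κ η + (2*κ + η^2/2) * F1 κ η + (κ/2) * η * F κ η = 0 := by
  classical
  set A : ℕ → ℝ := fun n => η * f2 κ n η + 2*κ * f1 κ n η with hA
  set B : ℕ → ℝ := fun n => (η^2/2) * f1 κ n η + (κ/2) * η * f0 κ n η with hB
  have hSA : Summable A :=
    (((summable_f2 hκ η).mul_left η).add ((summable_f1 hκ η).mul_left (2*κ)))
  have hSB : Summable B :=
    (((summable_f1 hκ η).mul_left (η^2/2)).add ((summable_f0 hκ η).mul_left ((κ/2) * η)))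
  -- rewrite LHS as  ∑' A + ∑' B
  have hL : η * F2 κ η + (2*κ + η^2/2) * F1 κ η + (κ/2) * η * F κ η
      = (∑' n, A n) + (∑' n, B n) := by
    rw [F, F1, F2, ← tsum_mul_left (a := η), ← tsum_mul_left (a := (2*κ + η^2/2)),
      ← tsum_mul_left (a := (κ/2) * η)]
    rw [← Summable.tsum_add hSA hSB]
    rw [← Summable.tsum_add ((summable_f2 hκ η).mul_left η) ((summable_f1 hκ η).mul_left (2*κ + η^2/2)),
      ← Summable.tsum_add (((summable_f2 hκ η).mul_left η).add ((summable_f1 hκ η).mul_left (2*κ + η^2/2)))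
        ((summable_f0 hκ η).mul_left ((κ/2) * η))]
    apply tsum_congr
    intro n
    simp only [hA, hB]
    ring
  rw [hL]
  -- key cancellation
  have hA0 : A 0 = 0 := by simp [hA, f1, f2]
  have hAB : ∀ n, A (n+1) = - B n := by
    intro n
    have hrec := c_rec hκ n
    have e1 : 2*(n+1)-1-1 = 2*n := by omega
    have e2 : 2*(n+1)-1 = 2*n+1 := by omega
    have e3 : ((2*n:ℕ):ℝ) * η^(2*n-1) * η^2 = ((2*n:ℕ):ℝ) * η^(2*n+1) := by
      rcases n with _ | m
      · simp
      · have e4 : 2*(m+1)-1 = 2*m+1 := by omega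
        rw [e4]
        push_cast
        ring
    simp only [hA, hB, f0, f1, f2, e1, e2]
    push_cast at hrec ⊢
    push_cast at e3
    linear_combination (η^(2*n) * η) * hrec + (c κ n / 2) * e3
  have hsum : (∑' n, A n) = - ∑' n, B n := by
    rw [Summable.tsum_eq_zero_add hSA, hA0, zero_add]
    rw [tsum_congr (fun n => hAB n)]
    exact tsum_neg
  rw [hsum]
  ring

def g (κ η : ℝ) : ℝ := η ^ κ * F κ η
def dg (κ η : ℝ) : ℝ := κ * η ^ (κ-1) * F κ η + η ^ κ * F1 κ η

lemma hasDerivAt_g {κ : ℝ} (hκ : 1 ≤ κ) {η : ℝ} (hη : 0 < η) :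
    HasDerivAt (g κ) (dg κ η) η := by
  have h1 : HasDerivAt (fun y : ℝ => y ^ κ) (κ * η ^ (κ-1)) η :=
    Real.hasDerivAt_rpow_const (Or.inl hη.ne')
  exact h1.mul (hasDerivAt_F hκ η)

lemma rpow_sub_one {η : ℝ} (hη : 0 < η) (κ : ℝ) : η ^ (κ-1) = η ^ κ / η := by
  rw [Real.rpow_sub hη, Real.rpow_one]

lemma rpow_sub_two {η : ℝ} (hη : 0 < η) (κ : ℝ) : η ^ (κ-1-1) = η ^ κ / η^2 := by
  rw [Real.rpow_sub hη, Real.rpow_sub hη, Real.rpow_one]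
  ring

lemma hasDerivAt_dg {κ : ℝ} (hκ : 1 ≤ κ) {η : ℝ} (hη : 0 < η) :
    HasDerivAt (dg κ) (-(η/2) * dg κ η + (κ*(κ-1)/η^2) * g κ η) η := by
  have h1 : HasDerivAt (fun y : ℝ => y ^ κ) (κ * η ^ (κ-1)) η :=
    Real.hasDerivAt_rpow_const (Or.inl hη.ne')
  have h2 : HasDerivAt (fun y : ℝ => y ^ (κ-1)) ((κ-1) * η ^ (κ-1-1)) η :=
    Real.hasDerivAt_rpow_const (Or.inl hη.ne')
  have hD := ((h2.const_mul κ).mul (hasDerivAt_F hκ η)).add (h1.mul (hasDerivAt_F1 hκ η))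
  refine hD.congr_deriv ?_
  symm
  have hode := F_ode hκ η
  have e1 : η ^ (κ-1) * η = η ^ κ := by
    rw [rpow_sub_one hη]; field_simp
  have e4 : κ*(κ-1)/η^2 * (η ^ κ * F κ η) = κ*(κ-1) * (η ^ (κ-1-1) * F κ η) := by
    rw [rpow_sub_two hη]; ring
  simp only [dg, g]
  rw [e4]
  linear_combination (-(η ^ (κ-1))) * hode + (F2 κ η + (η/2) * F1 κ η) * e1

lemma continuousOn_g {κ : ℝ} (hκ : 1 ≤ κ) : ContinuousOn (g κ) (Ioi 0) :=
  fun x hx => ((hasDerivAt_g hκ hx).continuousAt).continuousWithinAt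

lemma continuousOn_dg {κ : ℝ} (hκ : 1 ≤ κ) : ContinuousOn (dg κ) (Ioi 0) :=
  fun x hx => ((hasDerivAt_dg hκ hx).continuousAt).continuousWithinAt

/-- positivity of the Kummer function on the nonnegative axis -/
lemma F_pos {κ : ℝ} (hκ : 1 ≤ κ) {η : ℝ} (hη : 0 ≤ η) : 0 < F κ η := by
  by_contra hcon
  push_neg at hcon
  have hη0 : 0 < η := by
    rcases eq_or_lt_of_le hη with h | h
    · rw [← h, F_zero] at hcon; linarith
    · exact h
  set Z : Set ℝ := Icc 0 η ∩ (F κ) ⁻¹' (Iic 0) with hZ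
  have hZc : IsClosed Z := isClosed_Icc.inter (isClosed_Iic.preimage (continuous_F hκ))
  have hZne : Z.Nonempty := ⟨η, ⟨hη, le_rfl⟩, hcon⟩
  have hZbd : BddBelow Z := ⟨0, fun y hy => hy.1.1⟩
  set z := sInf Z with hz
  have hzZ : z ∈ Z := hZc.csInf_mem hZne hZbd
  have hz0 : 0 < z := by
    rcases eq_or_lt_of_le hzZ.1.1 with h | h
    · exfalso; have := hzZ.2; rw [← h] at this
      simp only [mem_preimage, mem_Iic] at this
      rw [F_zero] at this; linarith
    · exact h
  have hposlt : ∀ y, 0 ≤ y → y < z → 0 < F κ y := by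
    intro y hy0 hyz
    by_contra hcy
    push_neg at hcy
    have : y ∈ Z := ⟨⟨hy0, hyz.le.trans hzZ.1.2⟩, hcy⟩
    exact absurd (csInf_le hZbd this) (not_le.2 hyz)
  -- find η₁ > 0 below z where dg > 0
  have hφ : Continuous (fun y => κ * F κ y + y * F1 κ y) :=
    (continuous_const.mul (continuous_F hκ)).add (continuous_id.mul (continuous_F1 hκ))
  have hφ0 : (0:ℝ) < κ * F κ 0 + 0 * F1 κ 0 := by rw [F_zero]; simp; linarith
  have hev : ∀ᶠ y in nhds (0:ℝ), 0 < κ * F κ y + y * F1 κ y :=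
    (hφ.continuousAt (x := 0)).eventually (eventually_gt_nhds hφ0)
  obtain ⟨δ, hδ, hball⟩ := Metric.eventually_nhds_iff.1 hev
  set η₁ := min (δ/2) (z/2) with hη₁
  have hη₁0 : 0 < η₁ := lt_min (by linarith) (by linarith)
  have hη₁z : η₁ < z := (min_le_right _ _).trans_lt (by linarith)
  have hφη₁ : 0 < κ * F κ η₁ + η₁ * F1 κ η₁ := by
    apply hball
    rw [Real.dist_eq, sub_zero, abs_of_pos hη₁0]
    exact (min_le_left _ _).trans_lt (by linarith)
  have hdgη₁ : 0 < dg κ η₁ := by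
    have h1 : (0:ℝ) < η₁ ^ κ := Real.rpow_pos_of_pos hη₁0 κ
    have key : dg κ η₁ = (η₁ ^ κ / η₁) * (κ * F κ η₁ + η₁ * F1 κ η₁) := by
      rw [dg, rpow_sub_one hη₁0]
      field_simp
    rw [key]
    exact mul_pos (div_pos h1 hη₁0) hφη₁
  -- E = exp(y²/4) * dg is monotone on [η₁, z]
  set E : ℝ → ℝ := fun y => Real.exp (y^2/4) * dg κ y with hE
  have hEderiv : ∀ y : ℝ, 0 < y → y < z →
      HasDerivAt E (Real.exp (y^2/4) * ((κ*(κ-1)/y^2) * g κ y)) y := by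
    intro y hy hyz
    have hq : HasDerivAt (fun s : ℝ => s^2/4) (y/2) y := by
      have := (hasDerivAt_pow 2 y).div_const 4
      refine this.congr_deriv ?_
      symm
      push_cast; ring
    have := (hq.exp).mul (hasDerivAt_dg hκ hy)
    refine this.congr_deriv ?_
    symm
    ring
  have hEmono : MonotoneOn E (Icc η₁ z) := by
    apply monotoneOn_of_deriv_nonneg (convex_Icc _ _)
    · have hEc : ContinuousOn E (Ioi 0) :=
        ((Real.continuous_exp.comp ((continuous_pow 2).div_const 4)).continuousOn).mul
          (continuousOn_dg hκ)
      exact hEc.mono (fun s hs => lt_of_lt_of_le hη₁0 hs.1)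
    · intro y hy
      rw [interior_Icc] at hy
      exact ((hEderiv y (hη₁0.trans hy.1) hy.2).differentiableAt).differentiableWithinAt
    · intro y hy
      rw [interior_Icc] at hy
      have hy0 : 0 < y := hη₁0.trans hy.1
      rw [(hEderiv y hy0 hy.2).deriv]
      have hF : 0 < F κ y := hposlt y hy0.le hy.2
      have hg : 0 < g κ y := mul_pos (Real.rpow_pos_of_pos hy0 κ) hF
      have : 0 ≤ κ*(κ-1) := by nlinarith
      positivity
  have hdgpos : ∀ y ∈ Icc η₁ z, 0 < dg κ y := by
    intro y hy
    have h1 : E η₁ ≤ E y := hEmono ⟨le_rfl, hη₁z.le⟩ hy hy.1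
    have h2 : 0 < E η₁ := mul_pos (Real.exp_pos _) hdgη₁
    have h3 : 0 < E y := lt_of_lt_of_le h2 h1
    rw [hE] at h3
    simp only at h3
    nlinarith [Real.exp_pos (y^2/4)]
  have hgmono : StrictMonoOn (g κ) (Icc η₁ z) := by
    apply strictMonoOn_of_deriv_pos (convex_Icc _ _)
    · intro y hy
      exact (continuousOn_g hκ) y (lt_of_lt_of_le hη₁0 hy.1)
        |>.mono (fun s hs => lt_of_lt_of_le hη₁0 hs.1)
    · intro y hy
      rw [interior_Icc] at hy
      have hy0 : 0 < y := hη₁0.trans hy.1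
      rw [(hasDerivAt_g hκ hy0).deriv]
      exact hdgpos y ⟨hy.1.le, hy.2.le⟩
  have hlt : g κ η₁ < g κ z := hgmono ⟨le_rfl, hη₁z.le⟩ ⟨hη₁z.le, le_rfl⟩ hη₁z
  have hgη₁ : 0 < g κ η₁ :=
    mul_pos (Real.rpow_pos_of_pos hη₁0 κ) (hposlt η₁ hη₁0.le hη₁z)
  have hgz : g κ z ≤ 0 := by
    have hFz : F κ z ≤ 0 := hzZ.2
    have : (0:ℝ) < z ^ κ := Real.rpow_pos_of_pos hz0 κ
    rw [g]
    nlinarith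
  linarith

lemma g_pos {κ : ℝ} (hκ : 1 ≤ κ) {η : ℝ} (hη : 0 < η) : 0 < g κ η :=
  mul_pos (Real.rpow_pos_of_pos hη κ) (F_pos hκ hη.le)

section W
variable {κ₁ κ₂ : ℝ}

def Wr (κ₁ κ₂ η : ℝ) : ℝ := g κ₁ η * dg κ₂ η - g κ₂ η * dg κ₁ η

lemma hasDerivAt_Wr (hκ₁ : 1 ≤ κ₁) (hκ₂ : 1 ≤ κ₂) {η : ℝ} (hη : 0 < η) :
    HasDerivAt (Wr κ₁ κ₂) (-(η/2) * Wr κ₁ κ₂ η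
      + (κ₂*(κ₂-1) - κ₁*(κ₁-1))/η^2 * (g κ₁ η * g κ₂ η)) η := by
  have hD := ((hasDerivAt_g hκ₁ hη).mul (hasDerivAt_dg hκ₂ hη)).sub
    ((hasDerivAt_g hκ₂ hη).mul (hasDerivAt_dg hκ₁ hη))
  refine hD.congr_deriv ?_
  symm
  simp only [Wr]
  field_simp
  ring

def EW (κ₁ κ₂ η : ℝ) : ℝ := Real.exp (η^2/4) * Wr κ₁ κ₂ η

lemma hasDerivAt_EW (hκ₁ : 1 ≤ κ₁) (hκ₂ : 1 ≤ κ₂) {η : ℝ} (hη : 0 < η) :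
    HasDerivAt (EW κ₁ κ₂)
      (Real.exp (η^2/4) * ((κ₂*(κ₂-1) - κ₁*(κ₁-1))/η^2 * (g κ₁ η * g κ₂ η))) η := by
  have hq : HasDerivAt (fun s : ℝ => s^2/4) (η/2) η := by
    have := (hasDerivAt_pow 2 η).div_const 4
    refine this.congr_deriv ?_
    symm
    push_cast; ring
  have := (hq.exp).mul (hasDerivAt_Wr hκ₁ hκ₂ hη)
  refine this.congr_deriv ?_
  symm
  simp only [EW, Wr]
  ring

lemma Wr_eq (hκ₁ : 1 ≤ κ₁) (hκ₂ : 1 ≤ κ₂) {η : ℝ} (hη : 0 < η) :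
    Wr κ₁ κ₂ η = η ^ (κ₁ + κ₂ - 1) *
      ((κ₂ - κ₁) * (F κ₁ η * F κ₂ η)
        + η * (F κ₁ η * F1 κ₂ η - F κ₂ η * F1 κ₁ η)) := by
  have e1 : η ^ κ₁ * η ^ (κ₂ - 1) = η ^ (κ₁ + κ₂ - 1) := by
    rw [← Real.rpow_add hη]; congr 1; ring
  have e2 : η ^ κ₂ * η ^ (κ₁ - 1) = η ^ (κ₁ + κ₂ - 1) := by
    rw [← Real.rpow_add hη]; congr 1; ring
  have e3 : η ^ κ₁ * η ^ κ₂ = η ^ (κ₁ + κ₂ - 1) * η := by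
    rw [← Real.rpow_add hη, rpow_sub_one hη]
    field_simp
  simp only [Wr, g, dg]
  linear_combination (κ₂ * (F κ₁ η * F κ₂ η)) * e1 - (κ₁ * (F κ₁ η * F κ₂ η)) * e2
    + (F κ₁ η * F1 κ₂ η - F κ₂ η * F1 κ₁ η) * e3

lemma EW_tendsto (hκ₁ : 1 ≤ κ₁) (hκ₂ : 1 ≤ κ₂) :
    Tendsto (EW κ₁ κ₂) (nhdsWithin 0 (Ioi 0)) (nhds 0) := by
  set B : ℝ → ℝ := fun η => (κ₂ - κ₁) * (F κ₁ η * F κ₂ η)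
    + η * (F κ₁ η * F1 κ₂ η - F κ₂ η * F1 κ₁ η) with hB
  have hBcont : Continuous B := by
    apply Continuous.add
    · exact continuous_const.mul ((continuous_F hκ₁).mul (continuous_F hκ₂))
    · exact continuous_id.mul (((continuous_F hκ₁).mul (continuous_F1 hκ₂)).sub
        ((continuous_F hκ₂).mul (continuous_F1 hκ₁)))
  have hp : (0:ℝ) < κ₁ + κ₂ - 1 := by linarith
  have hrpow : Tendsto (fun η : ℝ => η ^ (κ₁ + κ₂ - 1)) (nhdsWithin 0 (Ioi 0)) (nhds 0) := by
    have hc : ContinuousAt (fun η : ℝ => η ^ (κ₁ + κ₂ - 1)) 0 :=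
      Real.continuousAt_rpow_const 0 _ (Or.inr hp.le)
    have := hc.tendsto
    rw [Real.zero_rpow hp.ne'] at this
    exact this.mono_left nhdsWithin_le_nhds
  have hexp : Tendsto (fun η : ℝ => Real.exp (η^2/4)) (nhdsWithin 0 (Ioi 0)) (nhds 1) := by
    have hc : Continuous (fun η : ℝ => Real.exp (η^2/4)) := by continuity
    have h2 := (hc.continuousAt (x := 0)).tendsto
    have h3 : Real.exp ((0:ℝ)^2/4) = 1 := by norm_num
    rw [h3] at h2
    exact h2.mono_left nhdsWithin_le_nhds
  have hBt : Tendsto B (nhdsWithin 0 (Ioi 0)) (nhds (B 0)) :=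
    (hBcont.continuousAt).tendsto.mono_left nhdsWithin_le_nhds
  have hmain : Tendsto (fun η => Real.exp (η^2/4) * (η ^ (κ₁ + κ₂ - 1) * B η))
      (nhdsWithin 0 (Ioi 0)) (nhds 0) := by
    have := hexp.mul (hrpow.mul hBt)
    simpa using this
  apply hmain.congr'
  filter_upwards [self_mem_nhdsWithin] with η hη
  rw [EW, Wr_eq hκ₁ hκ₂ hη]

lemma EW_strictMono (hκ₁ : 1 ≤ κ₁) (h12 : κ₁ < κ₂) :
    StrictMonoOn (EW κ₁ κ₂) (Ioi 0) := by
  have hκ₂ : 1 ≤ κ₂ := hκ₁.trans h12.le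
  apply strictMonoOn_of_deriv_pos (convex_Ioi _)
  · intro y hy
    exact ((hasDerivAt_EW hκ₁ hκ₂ hy).continuousAt).continuousWithinAt
  · intro y hy
    rw [interior_Ioi] at hy
    rw [(hasDerivAt_EW hκ₁ hκ₂ hy).deriv]
    have hy0 : (0:ℝ) < y := hy
    have hgam : 0 < κ₂*(κ₂-1) - κ₁*(κ₁-1) := by nlinarith
    have h1 : 0 < g κ₁ y := g_pos hκ₁ hy
    have h2 : 0 < g κ₂ y := g_pos hκ₂ hy
    positivity

lemma Wr_pos (hκ₁ : 1 ≤ κ₁) (h12 : κ₁ < κ₂) {η : ℝ} (hη : 0 < η) :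
    0 < Wr κ₁ κ₂ η := by
  have hκ₂ : 1 ≤ κ₂ := hκ₁.trans h12.le
  have hmono := EW_strictMono hκ₁ h12
  have h1 : 0 ≤ EW κ₁ κ₂ (η/2) := by
    apply le_of_tendsto (EW_tendsto hκ₁ hκ₂)
    filter_upwards [Ioo_mem_nhdsGT_of_mem
      (show (0:ℝ) ∈ Ico (0:ℝ) (η/2) from ⟨le_rfl, by linarith⟩)] with y hy
    exact (hmono (mem_Ioi.2 hy.1) (mem_Ioi.2 (by linarith : (0:ℝ) < η/2)) hy.2).le
  have h2 : EW κ₁ κ₂ (η/2) < EW κ₁ κ₂ η :=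
    hmono (mem_Ioi.2 (by linarith : (0:ℝ) < η/2)) (mem_Ioi.2 hη) (by linarith)
  have h3 : 0 < EW κ₁ κ₂ η := lt_of_le_of_lt h1 h2
  rw [EW] at h3
  nlinarith [Real.exp_pos (η^2/4)]

end W
lemma kummer_eq_F (κ η : ℝ) : kummerM (κ/2) (κ + 1/2) (-η^2/4) = F κ η := by
  rw [kummerM, F]
  apply tsum_congr
  intro n
  rw [f0, c]
  have h1 : (-η^2/4 : ℝ) = (-1/4) * η^2 := by ring
  rw [h1, mul_pow, ← pow_mul]
  ring_nf

lemma vProf_eq {α ustar κ : ℝ} (η : ℝ) :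
    vProf α ustar κ η = ustar * g κ η / g κ α := by
  rw [vProf, kummer_eq_F, kummer_eq_F, g, g]
  ring

lemma deriv_vProf {α ustar κ : ℝ} (hα : 0 < α) (hκ : 1 ≤ κ) :
    deriv (vProf α ustar κ) α = ustar * dg κ α / g κ α := by
  have hfun : vProf α ustar κ = fun η => ustar * g κ η / g κ α :=
    funext (fun η => vProf_eq η)
  rw [hfun]
  exact (((hasDerivAt_g hκ hα).const_mul ustar).div_const (g κ α)).deriv


end VProfAux

open VProfAux in
/-- monotonicity of the left-hand profile family in `κ`: for
`1 ≤ κ₁ < κ₂` the difference `v(·,κ₂) − v(·,κ₁)` is negative on `(0,α)`, and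
`∂_η v(α, κ)` is strictly increasing in `κ` on `[1, ∞)`. -/
theorem vProf_monotonicity (α ustar : ℝ) (hα : 0 < α) (hu : 0 < ustar) :
    (∀ κ₁ κ₂ : ℝ, 1 ≤ κ₁ → κ₁ < κ₂ →
      (∀ η ∈ Set.Ioo (0:ℝ) α, vProf α ustar κ₂ η - vProf α ustar κ₁ η < 0) ∧
      deriv (vProf α ustar κ₁) α < deriv (vProf α ustar κ₂) α) ∧
    StrictMonoOn (fun κ : ℝ => deriv (vProf α ustar κ) α) (Set.Ici 1) := by

  have main : ∀ κ₁ κ₂ : ℝ, 1 ≤ κ₁ → κ₁ < κ₂ →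
      (∀ η ∈ Set.Ioo (0:ℝ) α, vProf α ustar κ₂ η - vProf α ustar κ₁ η < 0) ∧
      deriv (vProf α ustar κ₁) α < deriv (vProf α ustar κ₂) α := by
    intro κ₁ κ₂ hκ₁ h12
    have hκ₂ : 1 ≤ κ₂ := hκ₁.trans h12.le
    have hg1α : 0 < g κ₁ α := g_pos hκ₁ hα
    have hg2α : 0 < g κ₂ α := g_pos hκ₂ hα
    constructor
    · -- part (a): ratio monotonicity
      have hratio : StrictMonoOn (fun η => g κ₂ η / g κ₁ η) (Ioi 0) := by
        apply strictMonoOn_of_deriv_pos (convex_Ioi _)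
        · intro y hy
          have hy0 : (0:ℝ) < y := hy
          exact (((hasDerivAt_g hκ₂ hy0).div (hasDerivAt_g hκ₁ hy0)
            (g_pos hκ₁ hy0).ne').continuousAt).continuousWithinAt
        · intro y hy
          rw [interior_Ioi] at hy
          have hy0 : (0:ℝ) < y := hy
          rw [show (fun η => g κ₂ η / g κ₁ η) = g κ₂ / g κ₁ from rfl, ((hasDerivAt_g hκ₂ hy0).div (hasDerivAt_g hκ₁ hy0) (g_pos hκ₁ hy0).ne').deriv]
          have hW := Wr_pos hκ₁ h12 hy0
          rw [Wr] at hW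
          have hg1 : 0 < g κ₁ y := g_pos hκ₁ hy0
          apply div_pos _ (by positivity)
          linarith
      intro η hη
      have hr : g κ₂ η / g κ₁ η < g κ₂ α / g κ₁ α :=
        hratio (mem_Ioi.2 hη.1) (mem_Ioi.2 hα) hη.2
      have hg1η : 0 < g κ₁ η := g_pos hκ₁ hη.1
      have hg2η : 0 < g κ₂ η := g_pos hκ₂ hη.1
      rw [div_lt_div_iff₀ hg1η hg1α] at hr
      rw [vProf_eq, vProf_eq, sub_neg, div_lt_div_iff₀ hg2α hg1α]
      nlinarith
    · -- part (b)
      rw [deriv_vProf hα hκ₁, deriv_vProf hα hκ₂]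
      have hW := Wr_pos hκ₁ h12 hα
      rw [Wr] at hW
      rw [div_lt_div_iff₀ hg1α hg2α]
      nlinarith
  exact ⟨main, fun κ₁ hκ₁ κ₂ _ h12 => (main κ₁ κ₂ hκ₁ h12).2⟩


end
end

section
/- Let p* : (0,∞) → [0,∞) be measurable with ∫₀ˣ ξ²·p*(ξ) dξ < ∞ for every x > 0, and let γ ≥ 0. If lim_{x→∞} (1/x)·∫₀ˣ ξ²·p*(ξ) dξ = γ, then p* is integrable on [1,∞) and lim_{x→∞} x·∫_x^∞ p*(ξ) dξ = γ. -/
open MeasureTheory Filter Set Real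

open scoped ENNReal

private lemma aux_meas_rpow (c : ℝ) : Measurable (fun t : ℝ => t ^ c) := by
  measurability

/-- Tauberian-type result: if the averaged second moment
`(1/x)∫₀ˣ ξ² p*(ξ) dξ` of a non-negative measurable function `p*` converges to `γ`,
then `p*` is integrable on `[1,∞)` and the tail functional `x ∫_x^∞ p*(ξ) dξ` converges
to the same limit `γ`. -/
theorem tail_functional_tauberian (pstar : ℝ → ℝ) (hmeas : Measurable pstar)
    (hnn : ∀ x : ℝ, 0 < x → 0 ≤ pstar x)
    (hloc : ∀ x > (0:ℝ), IntegrableOn (fun ξ => ξ ^ 2 * pstar ξ) (Set.Ioc 0 x))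
    (γ : ℝ) (hγ : 0 ≤ γ)
    (hlim : Filter.Tendsto (fun x : ℝ => (1 / x) * ∫ ξ in Set.Ioc (0:ℝ) x, ξ ^ 2 * pstar ξ)
      Filter.atTop (nhds γ)) :
    IntegrableOn pstar (Set.Ici 1) ∧
    Filter.Tendsto (fun x : ℝ => x * ∫ ξ in Set.Ioi x, pstar ξ)
      Filter.atTop (nhds γ) := by
  set H : ℝ → ℝ := fun t => ∫ ξ in Set.Ioc (0:ℝ) t, ξ ^ 2 * pstar ξ with hHdef
  have hH_nonneg : ∀ t, 0 ≤ H t := by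
    intro t
    apply setIntegral_nonneg measurableSet_Ioc
    intro ξ hξ
    exact mul_nonneg (sq_nonneg ξ) (hnn ξ hξ.1)
  have hsplit : ∀ a b : ℝ, 0 < a → a ≤ b →
      H b = H a + ∫ ξ in Set.Ioc a b, ξ ^ 2 * pstar ξ := by
    intro a b ha hab
    have hU : Set.Ioc (0:ℝ) a ∪ Set.Ioc a b = Set.Ioc 0 b := Set.Ioc_union_Ioc_eq_Ioc ha.le hab
    have hd : Disjoint (Set.Ioc (0:ℝ) a) (Set.Ioc a b) := Set.Ioc_disjoint_Ioc_of_le le_rfl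
    have h1 : IntegrableOn (fun ξ => ξ ^ 2 * pstar ξ) (Set.Ioc 0 a) := hloc a ha
    have h2 : IntegrableOn (fun ξ => ξ ^ 2 * pstar ξ) (Set.Ioc a b) :=
      (hloc b (ha.trans_le hab)).mono_set (Set.Ioc_subset_Ioc_left ha.le)
    have := setIntegral_union hd measurableSet_Ioc h1 h2 (f := fun ξ => ξ ^ 2 * pstar ξ) (μ := volume)
    rw [hHdef]
    simp only [hU] at this
    exact this
  have hHmono : Monotone H := by
    intro a b hab
    rcases le_or_gt a 0 with ha | ha
    · have : H a = 0 := by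
        rw [hHdef]; simp [Set.Ioc_eq_empty_of_le ha]
      rw [this]; exact hH_nonneg b
    · rw [hsplit a b ha hab]
      have : 0 ≤ ∫ ξ in Set.Ioc a b, ξ ^ 2 * pstar ξ :=
        setIntegral_nonneg measurableSet_Ioc fun ξ hξ =>
          mul_nonneg (sq_nonneg ξ) (hnn ξ (ha.trans hξ.1))
      linarith
  have hHmeas : Measurable H := hHmono.measurable
  have hlim' : Tendsto (fun x : ℝ => H x / x) atTop (nhds γ) := by
    apply hlim.congr
    intro x
    rw [one_div, inv_mul_eq_div]
  -- linear bound
  obtain ⟨x₁, hx₁⟩ := (eventually_atTop.mp (hlim'.eventually (gt_mem_nhds (lt_add_one γ))))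
  set x₀ : ℝ := max x₁ 1 with hx₀def
  have hx₀1 : (1:ℝ) ≤ x₀ := le_max_right _ _
  set C : ℝ := (γ + 1) * x₀ with hCdef
  have hCpos : 0 < C := by positivity
  have hC : ∀ t : ℝ, 1 ≤ t → H t ≤ C * t := by
    intro t ht
    rcases le_or_gt x₀ t with h | h
    · have h1 : H t / t < γ + 1 := hx₁ t (le_trans (le_max_left _ _) h)
      have ht0 : 0 < t := lt_of_lt_of_le one_pos ht
      have : H t < (γ + 1) * t := by
        rwa [div_lt_iff₀ ht0] at h1
      rw [hCdef]
      nlinarith [mul_nonneg (mul_nonneg (by linarith : (0:ℝ) ≤ γ+1) ht0.le) (by linarith : (0:ℝ) ≤ x₀ - 1)]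
    · have h1 : H t ≤ H x₀ := hHmono h.le
      have h2 : H x₀ / x₀ < γ + 1 := hx₁ x₀ (le_max_left _ _)
      have hx₀pos : (0:ℝ) < x₀ := lt_of_lt_of_le one_pos hx₀1
      have : H x₀ < (γ + 1) * x₀ := by rwa [div_lt_iff₀ hx₀pos] at h2
      rw [hCdef]
      nlinarith [mul_nonneg (mul_nonneg (by linarith : (0:ℝ) ≤ γ+1) hx₀pos.le) (by linarith : (0:ℝ) ≤ t - 1)]
  clear hlim
  -- pointwise kernel identity
  have hker : ∀ ξ : ℝ, 0 < ξ →
      ENNReal.ofReal (ξ ^ (-2:ℝ)) = ∫⁻ t in Ioi ξ, ENNReal.ofReal (2 * t ^ (-3:ℝ)) := by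
    intro ξ hξ
    have hInt : IntegrableOn (fun t : ℝ => 2 * t ^ (-3:ℝ)) (Ioi ξ) :=
      (integrableOn_Ioi_rpow_of_lt (by norm_num) hξ).const_mul 2
    have hnn3 : 0 ≤ᵐ[volume.restrict (Ioi ξ)] fun t : ℝ => 2 * t ^ (-3:ℝ) := by
      filter_upwards [ae_restrict_mem measurableSet_Ioi] with t ht
      exact mul_nonneg (by norm_num) (rpow_nonneg (le_of_lt (hξ.trans ht)) _)
    rw [← ofReal_integral_eq_lintegral_ofReal hInt hnn3]
    congr 1
    rw [integral_const_mul, integral_Ioi_rpow_of_lt (by norm_num) hξ]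
    norm_num
    ring
  -- key Tonelli identity
  have key : ∀ x : ℝ, 1 ≤ x →
      ∫⁻ ξ in Ioi x, ENNReal.ofReal (pstar ξ)
        = ∫⁻ t in Ioi x, ENNReal.ofReal (2 * t ^ (-3:ℝ) * (H t - H x)) := by
    intro x hx
    have hxpos : (0:ℝ) < x := lt_of_lt_of_le one_pos hx
    set k : ℝ → ℝ → ℝ≥0∞ := fun ξ t =>
      if ξ < t then ENNReal.ofReal (ξ ^ 2 * pstar ξ) * ENNReal.ofReal (2 * t ^ (-3:ℝ)) else 0
      with hkdef
    have step1 : ∫⁻ ξ in Ioi x, ENNReal.ofReal (pstar ξ)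
        = ∫⁻ ξ in Ioi x, ∫⁻ t in Ioi x, k ξ t := by
      apply setLIntegral_congr_fun_ae measurableSet_Ioi
      apply Filter.Eventually.of_forall
      intro ξ hξ
      have hξ0 : (0:ℝ) < ξ := hxpos.trans hξ
      have e1 : ∀ t : ℝ, k ξ t
          = (Ioi ξ).indicator (fun t => ENNReal.ofReal (ξ ^ 2 * pstar ξ)
              * ENNReal.ofReal (2 * t ^ (-3:ℝ))) t := by
        intro t
        simp [hkdef, Set.indicator_apply, mem_Ioi]
      calc ENNReal.ofReal (pstar ξ)
          = ENNReal.ofReal (ξ ^ 2 * pstar ξ) * ENNReal.ofReal (ξ ^ (-2:ℝ)) := by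
            rw [← ENNReal.ofReal_mul (mul_nonneg (sq_nonneg ξ) (hnn ξ hξ0))]
            congr 1
            rw [show (-2:ℝ) = -(2:ℕ) by norm_num, Real.rpow_neg hξ0.le, Real.rpow_natCast]
            field_simp
        _ = ENNReal.ofReal (ξ ^ 2 * pstar ξ) * ∫⁻ t in Ioi ξ, ENNReal.ofReal (2 * t ^ (-3:ℝ)) := by
            rw [hker ξ hξ0]
        _ = ∫⁻ t in Ioi ξ, ENNReal.ofReal (ξ ^ 2 * pstar ξ) * ENNReal.ofReal (2 * t ^ (-3:ℝ)) := by
            rw [lintegral_const_mul' _ _ ENNReal.ofReal_ne_top]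
        _ = ∫⁻ t in Ioi x, k ξ t := by
            simp only [e1]
            rw [lintegral_indicator measurableSet_Ioi,
              Measure.restrict_restrict measurableSet_Ioi,
              Set.inter_eq_left.mpr (Set.Ioi_subset_Ioi hξ.le)]
    have hkm : Measurable (Function.uncurry k) := by
      have : Function.uncurry k = fun p : ℝ × ℝ =>
          if p.1 < p.2 then ENNReal.ofReal (p.1 ^ 2 * pstar p.1)
            * ENNReal.ofReal (2 * p.2 ^ (-3:ℝ)) else 0 := rfl
      rw [this]
      apply Measurable.ite (measurableSet_lt measurable_fst measurable_snd)
      · have hm3 : Measurable (fun t : ℝ => t ^ (-3:ℝ)) := aux_meas_rpow _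
        exact (ENNReal.measurable_ofReal.comp
          (((measurable_fst.pow_const 2).mul (hmeas.comp measurable_fst)))).mul
          (ENNReal.measurable_ofReal.comp ((hm3.comp measurable_snd).const_mul 2))
      · exact measurable_const
    have step2 : ∫⁻ ξ in Ioi x, ∫⁻ t in Ioi x, k ξ t
        = ∫⁻ t in Ioi x, ∫⁻ ξ in Ioi x, k ξ t := by
      exact lintegral_lintegral_swap hkm.aemeasurable
    have step3 : ∫⁻ t in Ioi x, ∫⁻ ξ in Ioi x, k ξ t
        = ∫⁻ t in Ioi x, ENNReal.ofReal (2 * t ^ (-3:ℝ) * (H t - H x)) := by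
      apply setLIntegral_congr_fun_ae measurableSet_Ioi
      apply Filter.Eventually.of_forall
      intro t ht
      have ht0 : (0:ℝ) < t := hxpos.trans ht
      have e2 : ∀ ξ : ℝ, k ξ t
          = (Iio t).indicator (fun ξ => ENNReal.ofReal (ξ ^ 2 * pstar ξ)
              * ENNReal.ofReal (2 * t ^ (-3:ℝ))) ξ := by
        intro ξ
        simp [hkdef, Set.indicator_apply, mem_Iio]
      have hIoc : IntegrableOn (fun ξ : ℝ => ξ ^ 2 * pstar ξ) (Ioc x t) :=
        (hloc t ht0).mono_set (Set.Ioc_subset_Ioc_left hxpos.le)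
      have hnnIoc : 0 ≤ᵐ[volume.restrict (Ioc x t)] fun ξ : ℝ => ξ ^ 2 * pstar ξ := by
        filter_upwards [ae_restrict_mem measurableSet_Ioc] with ξ hξ
        exact mul_nonneg (sq_nonneg ξ) (hnn ξ (hxpos.trans hξ.1))
      calc ∫⁻ ξ in Ioi x, k ξ t
          = ∫⁻ ξ in Ioo x t, ENNReal.ofReal (ξ ^ 2 * pstar ξ)
              * ENNReal.ofReal (2 * t ^ (-3:ℝ)) := by
            simp only [e2]
            rw [lintegral_indicator measurableSet_Iio,
              Measure.restrict_restrict measurableSet_Iio, Set.Iio_inter_Ioi]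
        _ = (∫⁻ ξ in Ioc x t, ENNReal.ofReal (ξ ^ 2 * pstar ξ))
              * ENNReal.ofReal (2 * t ^ (-3:ℝ)) := by
            rw [lintegral_mul_const' _ _ ENNReal.ofReal_ne_top,
              setLIntegral_congr (Ioo_ae_eq_Ioc (μ := volume) (a := x) (b := t))]
        _ = ENNReal.ofReal (H t - H x) * ENNReal.ofReal (2 * t ^ (-3:ℝ)) := by
            have hs : H t - H x = ∫ ξ in Set.Ioc x t, ξ ^ 2 * pstar ξ := by
              have := hsplit x t hxpos ht.le
              linarith
            rw [hs, ofReal_integral_eq_lintegral_ofReal hIoc hnnIoc]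
        _ = ENNReal.ofReal (2 * t ^ (-3:ℝ) * (H t - H x)) := by
            rw [← ENNReal.ofReal_mul (by linarith [hHmono (le_of_lt ht)] : (0:ℝ) ≤ H t - H x)]
            rw [mul_comm]
    rw [step1, step2, step3]
  have hm3 : Measurable (fun t : ℝ => t ^ (-3:ℝ)) := aux_meas_rpow _
  -- finiteness of the tail lintegral
  have hfin : ∀ x : ℝ, 1 ≤ x → ∫⁻ ξ in Ioi x, ENNReal.ofReal (pstar ξ) < ⊤ := by
    intro x hx
    have hxpos : (0:ℝ) < x := lt_of_lt_of_le one_pos hx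
    rw [key x hx]
    have hψ : IntegrableOn (fun t : ℝ => (2*C) * t ^ (-2:ℝ)) (Ioi x) :=
      (integrableOn_Ioi_rpow_of_lt (by norm_num) hxpos).const_mul (2*C)
    calc ∫⁻ t in Ioi x, ENNReal.ofReal (2 * t ^ (-3:ℝ) * (H t - H x))
        ≤ ∫⁻ t in Ioi x, ENNReal.ofReal ((2*C) * t ^ (-2:ℝ)) := by
          apply lintegral_mono_ae
          filter_upwards [ae_restrict_mem measurableSet_Ioi] with t ht
          apply ENNReal.ofReal_le_ofReal
          have ht0 : (0:ℝ) < t := hxpos.trans ht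
          have h1 : H t ≤ C * t := hC t (le_trans hx (le_of_lt ht))
          have h2 : 0 ≤ H x := hH_nonneg x
          have h3 : (0:ℝ) ≤ t ^ (-3:ℝ) := rpow_nonneg ht0.le _
          have h4 : t ^ (-2:ℝ) = t ^ (-3:ℝ) * t := by
            rw [show (-2:ℝ) = -3 + 1 by norm_num, Real.rpow_add ht0, Real.rpow_one]
          have h5 : 2 * t ^ (-3:ℝ) * (H t - H x) ≤ 2 * t ^ (-3:ℝ) * (C * t) := by
            apply mul_le_mul_of_nonneg_left (by linarith) (by positivity)
          calc 2 * t ^ (-3:ℝ) * (H t - H x) ≤ 2 * t ^ (-3:ℝ) * (C * t) := h5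
            _ = (2*C) * t ^ (-2:ℝ) := by rw [h4]; ring
      _ < ⊤ := hψ.lintegral_lt_top
  -- integrability of the tail
  have hIntOn : ∀ x : ℝ, 1 ≤ x → IntegrableOn pstar (Ioi x) := by
    intro x hx
    have hxpos : (0:ℝ) < x := lt_of_lt_of_le one_pos hx
    refine ⟨hmeas.aestronglyMeasurable.restrict, ?_⟩
    have heq : ∫⁻ ξ in Ioi x, ‖pstar ξ‖ₑ = ∫⁻ ξ in Ioi x, ENNReal.ofReal (pstar ξ) := by
      apply setLIntegral_congr_fun_ae measurableSet_Ioi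
      apply Filter.Eventually.of_forall
      intro ξ hξ
      rw [← enorm_eq_ofReal (hnn ξ (hxpos.trans hξ))]
    rw [HasFiniteIntegral, heq]
    exact hfin x hx
  -- real-valued tail identity
  have Teq : ∀ x : ℝ, 1 ≤ x → ∫ ξ in Ioi x, pstar ξ
      = ∫ t in Ioi x, 2 * t ^ (-3:ℝ) * (H t - H x) := by
    intro x hx
    have hxpos : (0:ℝ) < x := lt_of_lt_of_le one_pos hx
    have h1 : ∫ ξ in Ioi x, pstar ξ
        = (∫⁻ ξ in Ioi x, ENNReal.ofReal (pstar ξ)).toReal := by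
      apply integral_eq_lintegral_of_nonneg_ae
      · filter_upwards [ae_restrict_mem measurableSet_Ioi] with ξ hξ using hnn ξ (hxpos.trans hξ)
      · exact hmeas.aestronglyMeasurable.restrict
    have h2 : ∫ t in Ioi x, 2 * t ^ (-3:ℝ) * (H t - H x)
        = (∫⁻ t in Ioi x, ENNReal.ofReal (2 * t ^ (-3:ℝ) * (H t - H x))).toReal := by
      apply integral_eq_lintegral_of_nonneg_ae
      · filter_upwards [ae_restrict_mem measurableSet_Ioi] with t ht
        have ht0 : (0:ℝ) < t := hxpos.trans ht
        have := hHmono (le_of_lt ht)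
        have h3 : (0:ℝ) ≤ t ^ (-3:ℝ) := rpow_nonneg ht0.le _
        show (0:ℝ) ≤ 2 * t ^ (-3:ℝ) * (H t - H x)
        nlinarith
      · exact (((hm3.const_mul 2).mul (hHmeas.sub measurable_const)).aestronglyMeasurable).restrict
    rw [h1, h2, key x hx]
  -- integrability of t^(-3) * H t
  have hg1 : ∀ x : ℝ, 1 ≤ x → IntegrableOn (fun t : ℝ => t ^ (-3:ℝ) * H t) (Ioi x) := by
    intro x hx
    have hxpos : (0:ℝ) < x := lt_of_lt_of_le one_pos hx
    apply Integrable.mono' (g := fun t : ℝ => C * t ^ (-2:ℝ))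
      ((integrableOn_Ioi_rpow_of_lt (by norm_num) hxpos).const_mul C)
    · exact ((hm3.mul hHmeas).aestronglyMeasurable).restrict
    · filter_upwards [ae_restrict_mem measurableSet_Ioi] with t ht
      have ht0 : (0:ℝ) < t := hxpos.trans ht
      have h1 : H t ≤ C * t := hC t (le_trans hx (le_of_lt ht))
      have h4 : t ^ (-2:ℝ) = t ^ (-3:ℝ) * t := by
        rw [show (-2:ℝ) = -3 + 1 by norm_num, Real.rpow_add ht0, Real.rpow_one]
      rw [Real.norm_eq_abs, abs_of_nonneg (mul_nonneg (rpow_nonneg ht0.le _) (hH_nonneg t))]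
      calc t ^ (-3:ℝ) * H t ≤ t ^ (-3:ℝ) * (C * t) :=
            mul_le_mul_of_nonneg_left h1 (rpow_nonneg ht0.le _)
        _ = C * t ^ (-2:ℝ) := by rw [h4]; ring
  -- the split of the tail integral
  have Tsplit : ∀ x : ℝ, 1 ≤ x → ∫ t in Ioi x, 2 * t ^ (-3:ℝ) * (H t - H x)
      = 2 * (∫ t in Ioi x, t ^ (-3:ℝ) * H t) - H x * x ^ (-2:ℝ) := by
    intro x hx
    have hxpos : (0:ℝ) < x := lt_of_lt_of_le one_pos hx
    have e : EqOn (fun t : ℝ => 2 * t ^ (-3:ℝ) * (H t - H x))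
        (fun t : ℝ => 2 * (t ^ (-3:ℝ) * H t) - (2 * H x) * t ^ (-3:ℝ)) (Ioi x) := by
      intro t _; simp only []; ring
    rw [setIntegral_congr_fun measurableSet_Ioi e,
      integral_sub ((hg1 x hx).const_mul 2)
        ((integrableOn_Ioi_rpow_of_lt (by norm_num) hxpos).const_mul (2 * H x)),
      integral_const_mul, integral_const_mul, integral_Ioi_rpow_of_lt (by norm_num) hxpos]
    norm_num
    ring
  refine ⟨?_, ?_⟩
  · rw [integrableOn_Ici_iff_integrableOn_Ioi]
    exact hIntOn 1 le_rfl
  · rw [Metric.tendsto_atTop]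
    intro ε hε
    obtain ⟨x₂, hx₂⟩ := Metric.tendsto_atTop.mp hlim' (ε/4) (by linarith)
    refine ⟨max x₂ 1, fun x hxN => ?_⟩
    have hx1 : (1:ℝ) ≤ x := le_trans (le_max_right _ _) hxN
    have hxx₂ : x₂ ≤ x := le_trans (le_max_left _ _) hxN
    have hxpos : (0:ℝ) < x := lt_of_lt_of_le one_pos hx1
    have hTx : (∫ ξ in Ioi x, pstar ξ)
        = 2 * (∫ t in Ioi x, t ^ (-3:ℝ) * H t) - H x * x ^ (-2:ℝ) := by
      rw [Teq x hx1, Tsplit x hx1]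
    have hg2 : IntegrableOn (fun t : ℝ => γ * t ^ (-2:ℝ)) (Ioi x) :=
      (integrableOn_Ioi_rpow_of_lt (by norm_num) hxpos).const_mul γ
    set D := ∫ t in Ioi x, (t ^ (-3:ℝ) * H t - γ * t ^ (-2:ℝ)) with hD
    have hgval : ∫ t in Ioi x, γ * t ^ (-2:ℝ) = γ * x ^ (-1:ℝ) := by
      rw [integral_const_mul, integral_Ioi_rpow_of_lt (by norm_num) hxpos]
      norm_num
    have hAeq : (∫ t in Ioi x, t ^ (-3:ℝ) * H t) = D + γ * x ^ (-1:ℝ) := by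
      have hsub := integral_sub (hg1 x hx1) hg2
      rw [hgval] at hsub
      rw [hD, hsub]
      ring
    have hdiffInt : IntegrableOn (fun t : ℝ => t ^ (-3:ℝ) * H t - γ * t ^ (-2:ℝ)) (Ioi x) :=
      (hg1 x hx1).sub hg2
    have hDbound : |D| ≤ (ε/4) * x ^ (-1:ℝ) := by
      have h1 : |D| ≤ ∫ t in Ioi x, ‖t ^ (-3:ℝ) * H t - γ * t ^ (-2:ℝ)‖ := by
        rw [hD, ← Real.norm_eq_abs]
        exact norm_integral_le_integral_norm _
      have h2 : (∫ t in Ioi x, ‖t ^ (-3:ℝ) * H t - γ * t ^ (-2:ℝ)‖)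
          ≤ ∫ t in Ioi x, (ε/4) * t ^ (-2:ℝ) := by
        apply setIntegral_mono_on hdiffInt.norm
          ((integrableOn_Ioi_rpow_of_lt (by norm_num) hxpos).const_mul (ε/4))
          measurableSet_Ioi
        intro t ht
        have ht0 : (0:ℝ) < t := hxpos.trans ht
        have hds := hx₂ t (hxx₂.trans (le_of_lt ht))
        rw [Real.dist_eq] at hds
        have h4 : t ^ (-3:ℝ) = t ^ (-2:ℝ) * t⁻¹ := by
          rw [show (-3:ℝ) = -2 + -1 by norm_num, Real.rpow_add ht0, Real.rpow_neg_one]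
        have h5 : t ^ (-3:ℝ) * H t - γ * t ^ (-2:ℝ) = (H t / t - γ) * t ^ (-2:ℝ) := by
          rw [h4]
          field_simp
        rw [h5, Real.norm_eq_abs, abs_mul, abs_of_nonneg (rpow_nonneg ht0.le (-2:ℝ))]
        exact mul_le_mul_of_nonneg_right (le_of_lt hds) (rpow_nonneg ht0.le _)
      have h3 : ∫ t in Ioi x, (ε/4) * t ^ (-2:ℝ) = (ε/4) * x ^ (-1:ℝ) := by
        rw [integral_const_mul, integral_Ioi_rpow_of_lt (by norm_num) hxpos]
        norm_num
      linarith
    have hHx := hx₂ x hxx₂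
    rw [Real.dist_eq] at hHx
    rw [Real.dist_eq]
    have hxinv : x * x ^ (-1:ℝ) = 1 := by
      rw [Real.rpow_neg_one]
      field_simp
    have hxinv2 : x * x ^ (-2:ℝ) = x ^ (-1:ℝ) := by
      rw [show (-2:ℝ) = -1 + -1 by norm_num, Real.rpow_add hxpos, Real.rpow_neg_one]
      field_simp
    have h6 : H x * x ^ (-1:ℝ) = H x / x := by
      rw [Real.rpow_neg_one, div_eq_mul_inv]
    have hmain : x * (∫ ξ in Ioi x, pstar ξ) - γ = 2*x*D - (H x / x - γ) := by
      rw [hTx, hAeq]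
      linear_combination 2*γ*hxinv - H x * hxinv2 - h6
    have hDpos : (0:ℝ) < x ^ (-1:ℝ) := by positivity
    calc |x * (∫ ξ in Ioi x, pstar ξ) - γ| = |2*x*D - (H x / x - γ)| := by rw [hmain]
      _ ≤ |2*x*D| + |H x / x - γ| := abs_sub _ _
      _ = 2*x*|D| + |H x / x - γ| := by
          rw [abs_mul, abs_of_nonneg (by positivity : (0:ℝ) ≤ 2*x)]
      _ ≤ 2*x*((ε/4) * x ^ (-1:ℝ)) + ε/4 := by
          have := mul_le_mul_of_nonneg_left hDbound (by positivity : (0:ℝ) ≤ 2*x)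
          linarith [hHx.le]
      _ = (ε/2)*(x * x ^ (-1:ℝ)) + ε/4 := by ring
      _ = 3*ε/4 := by rw [hxinv]; ring
      _ < ε := by linarith
end
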